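/- (Theorem 2.) For every causal operator T and every index 1 ≤ i ≤ ℓ−1, the minimum of the state size n_i over all recurrent realizations of T equals rank(H_i); that is, the rank of the operator submatrix H_i = T_{i:,:i−1} is exactly the minimal state size required to represent the causal operation y = Tu as a recurrence at sequence index i. -/

import Mathlib

open Matrix

/-- `stProd n A i j` is the state-transition product `A (i-1) * A (i-2) * ⋯ * A j`
(mapping `ℝ^{n j}` to `ℝ^{n i}`), with the empty product (`i = j`) equal to the identity. -/
noncomputable def stProd (n : ℕ → ℕ) (A : ∀ i : ℕ, Matrix (Fin (n (i + 1))) (Fin (n i)) ℝ) :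
    (i j : ℕ) → Matrix (Fin (n i)) (Fin (n j)) ℝ
  | 0, j =>
      if h : (0 : ℕ) = j then
        (1 : Matrix (Fin (n 0)) (Fin (n 0)) ℝ).submatrix id (Fin.cast (congrArg n h.symm))
      else 0
  | i + 1, j =>
      if h : i + 1 = j then
        (1 : Matrix (Fin (n (i + 1))) (Fin (n (i + 1))) ℝ).submatrix id
          (Fin.cast (congrArg n h.symm))
      else A i * stProd n A i j

/-- `T` is a causal operator: its `d × d` blocks `T i j` vanish above the block diagonal. -/
def IsCausal (d ℓ : ℕ) (T : ℕ → ℕ → Matrix (Fin d) (Fin d) ℝ) : Prop :=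
  ∀ i j, i < ℓ → j < ℓ → i < j → T i j = 0

/-- `(A, B, C, D)` with state sizes `n` is a recurrent realization of the causal operator `T`:
`T i i = D i` and `T i j = C i * (A (i-1) * ⋯ * A (j+1)) * B j` for `i > j`. -/
def IsRealization (d ℓ : ℕ) (T : ℕ → ℕ → Matrix (Fin d) (Fin d) ℝ) (n : ℕ → ℕ)
    (A : ∀ i : ℕ, Matrix (Fin (n (i + 1))) (Fin (n i)) ℝ)
    (B : ∀ i : ℕ, Matrix (Fin (n (i + 1))) (Fin d) ℝ)
    (C : ∀ i : ℕ, Matrix (Fin d) (Fin (n i)) ℝ)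
    (D : ℕ → Matrix (Fin d) (Fin d) ℝ) : Prop :=
  (∀ i, i < ℓ → T i i = D i) ∧
  ∀ i j, i < ℓ → j < i → T i j = C i * stProd n A i (j + 1) * B j

/-- The operator submatrix `H_i = T_{i:,:i-1}`, with rows indexed by block row `i + k`
(`k < ℓ - i`) and columns by block column `j < i`. -/
def Hmat (d ℓ : ℕ) (T : ℕ → ℕ → Matrix (Fin d) (Fin d) ℝ) (i : ℕ) :
    Matrix (Fin (ℓ - i) × Fin d) (Fin i × Fin d) ℝ :=
  fun p q => T (i + (p.1 : ℕ)) (q.1 : ℕ) p.2 q.2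

/-- The observability matrix at index `i`, with block rows `C (i+k) * A (i+k-1) * ⋯ * A i`. -/
noncomputable def Obs (d ℓ : ℕ) (n : ℕ → ℕ)
    (A : ∀ i : ℕ, Matrix (Fin (n (i + 1))) (Fin (n i)) ℝ)
    (C : ∀ i : ℕ, Matrix (Fin d) (Fin (n i)) ℝ) (i : ℕ) :
    Matrix (Fin (ℓ - i) × Fin d) (Fin (n i)) ℝ :=
  fun p s => (C (i + (p.1 : ℕ)) * stProd n A (i + (p.1 : ℕ)) i) p.2 s

/-- The controllability matrix at index `i`, with block columns `A (i-1) * ⋯ * A (j+1) * B j`. -/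
noncomputable def Ctrb (d : ℕ) (n : ℕ → ℕ)
    (A : ∀ i : ℕ, Matrix (Fin (n (i + 1))) (Fin (n i)) ℝ)
    (B : ∀ i : ℕ, Matrix (Fin (n (i + 1))) (Fin d) ℝ) (i : ℕ) :
    Matrix (Fin (n i)) (Fin i × Fin d) ℝ :=
  fun s q => (stProd n A i ((q.1 : ℕ) + 1) * B (q.1 : ℕ)) s q.2

section Lems
variable {n : ℕ → ℕ} {A : ∀ i : ℕ, Matrix (Fin (n (i + 1))) (Fin (n i)) ℝ}

lemma stProd_succ_of_ne {k j : ℕ} (h : k + 1 ≠ j) :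
    stProd n A (k + 1) j = A k * stProd n A k j := by
  rw [stProd, dif_neg h]

lemma stProd_self_apply (k : ℕ) (s t : Fin (n k)) :
    stProd n A k k s t = if (s : ℕ) = (t : ℕ) then 1 else 0 := by
  cases k with
  | zero =>
      rw [stProd, dif_pos rfl]
      simp [Matrix.submatrix_apply, Matrix.one_apply, Fin.ext_iff]
  | succ m =>
      rw [stProd, dif_pos rfl]
      simp [Matrix.submatrix_apply, Matrix.one_apply, Fin.ext_iff]
end Lems

def nF (i r d ℓ : ℕ) : ℕ → ℕ := fun j => if j = i then r else r + d * ℓ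

lemma nF_eq (i r d ℓ : ℕ) : nF i r d ℓ i = r := if_pos rfl
lemma nF_ne (i r d ℓ : ℕ) {j : ℕ} (h : j ≠ i) : nF i r d ℓ j = r + d * ℓ := if_neg h
lemma val_lt_big {i r d ℓ m : ℕ} (h : m ≠ i) (t : Fin (nF i r d ℓ m)) : (t : ℕ) < r + d * ℓ :=
  t.isLt.trans_eq (nF_ne i r d ℓ h)
lemma val_lt_r {i r d ℓ : ℕ} (t : Fin (nF i r d ℓ i)) : (t : ℕ) < r :=
  t.isLt.trans_eq (nF_eq i r d ℓ)

noncomputable def AF (i r d ℓ : ℕ) (Q' : ℕ → ℕ → ℝ) :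
    ∀ j : ℕ, Matrix (Fin (nF i r d ℓ (j + 1))) (Fin (nF i r d ℓ j)) ℝ :=
  fun j s t =>
    if j + 1 = i then
      (if r ≤ (t : ℕ) ∧ (t : ℕ) < r + i * d then Q' (s : ℕ) ((t : ℕ) - r) else 0)
    else if (s : ℕ) = (t : ℕ) then 1 else 0

noncomputable def SPF (i r d : ℕ) (Q' : ℕ → ℕ → ℝ) (m k s t : ℕ) : ℝ :=
  if m < i ∧ i ≤ k then (if r ≤ t ∧ t < r + i * d then Q' s (t - r) else 0)
  else if s = t then 1 else 0

lemma sum_fin_delta_right {N : ℕ} (f : ℕ → ℝ) (a : ℕ) :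
    ∑ u : Fin N, f (u : ℕ) * (if (u : ℕ) = a then 1 else 0) = if a < N then f a else 0 := by
  rw [Fin.sum_univ_eq_sum_range (fun u => f u * (if u = a then 1 else 0))]
  simp only [mul_ite, mul_one, mul_zero]
  rw [Finset.sum_ite_eq' (Finset.range N) a f]
  simp [Finset.mem_range]

lemma sum_fin_delta_left {N : ℕ} (f : ℕ → ℝ) (a : ℕ) :
    ∑ u : Fin N, (if a = (u : ℕ) then 1 else 0) * f (u : ℕ) = if a < N then f a else 0 := by
  rw [Fin.sum_univ_eq_sum_range (fun u => (if a = u then 1 else 0) * f u)]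
  simp only [ite_mul, one_mul, zero_mul]
  rw [Finset.sum_ite_eq (Finset.range N) a f]
  simp [Finset.mem_range]

lemma stProd_AF (i r d ℓ : ℕ) (Q' : ℕ → ℕ → ℝ) (h1 : 1 ≤ i)
    (hQ0 : ∀ a b, r ≤ a → Q' a b = 0) :
    ∀ k m, m ≤ k → ∀ (s : Fin (nF i r d ℓ k)) (t : Fin (nF i r d ℓ m)),
      stProd (nF i r d ℓ) (AF i r d ℓ Q') k m s t = SPF i r d Q' m k (s : ℕ) (t : ℕ) := by
  intro k
  induction k with
  | zero =>
      intro m hm s t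
      have hm0 : m = 0 := Nat.le_zero.mp hm
      subst hm0
      rw [stProd_self_apply, SPF, if_neg (show ¬((0:ℕ) < i ∧ i ≤ 0) by omega)]
  | succ k ih =>
      intro m hm s t
      rcases Nat.eq_or_lt_of_le hm with he | hlt
      · subst he
        rw [stProd_self_apply, SPF, if_neg (show ¬(k + 1 < i ∧ i ≤ k + 1) by omega)]
      · have hmk : m ≤ k := Nat.lt_succ_iff.mp hlt
        rw [stProd_succ_of_ne (by omega), Matrix.mul_apply]
        by_cases hki : k + 1 = i
        · -- A k is the compression step A (i-1)
          have hmne : m ≠ i := by omega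
          have hkne : k ≠ i := by omega
          calc ∑ u : Fin (nF i r d ℓ k), AF i r d ℓ Q' k s u *
                stProd (nF i r d ℓ) (AF i r d ℓ Q') k m u t
              = ∑ u : Fin (nF i r d ℓ k),
                  (fun x => if r ≤ x ∧ x < r + i * d then Q' (s : ℕ) (x - r) else 0) (u : ℕ) *
                  (if (u : ℕ) = (t : ℕ) then 1 else 0) := by
                refine Finset.sum_congr rfl fun u _ => ?_
                rw [ih m hmk u t, AF, if_pos hki, SPF,
                  if_neg (show ¬(m < i ∧ i ≤ k) by omega)]
            _ = if (t : ℕ) < nF i r d ℓ k then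
                  (fun x => if r ≤ x ∧ x < r + i * d then Q' (s : ℕ) (x - r) else 0) (t : ℕ)
                else 0 :=
                sum_fin_delta_right
                  (fun x => if r ≤ x ∧ x < r + i * d then Q' (s : ℕ) (x - r) else 0) (t : ℕ)
            _ = SPF i r d Q' m (k + 1) (s : ℕ) (t : ℕ) := by
                have ht : (t : ℕ) < nF i r d ℓ k :=
                  lt_of_lt_of_eq (val_lt_big hmne t) (nF_ne i r d ℓ hkne).symm
                rw [if_pos ht, SPF, if_pos (show m < i ∧ i ≤ k + 1 by omega)]
        · -- A k is identity-shaped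
          calc ∑ u : Fin (nF i r d ℓ k), AF i r d ℓ Q' k s u *
                stProd (nF i r d ℓ) (AF i r d ℓ Q') k m u t
              = ∑ u : Fin (nF i r d ℓ k),
                  (if (s : ℕ) = (u : ℕ) then 1 else 0) *
                  (fun x => SPF i r d Q' m k x (t : ℕ)) (u : ℕ) := by
                refine Finset.sum_congr rfl fun u _ => ?_
                rw [ih m hmk u t, AF, if_neg hki]
            _ = if (s : ℕ) < nF i r d ℓ k then
                  (fun x => SPF i r d Q' m k x (t : ℕ)) (s : ℕ) else 0 :=
                sum_fin_delta_left (fun x => SPF i r d Q' m k x (t : ℕ)) (s : ℕ)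
            _ = SPF i r d Q' m (k + 1) (s : ℕ) (t : ℕ) := by
                simp only [SPF]
                by_cases hk : k = i
                · subst hk
                  rw [nF_eq]
                  rcases Nat.lt_or_ge m k with hmi | hmi
                  · rw [if_pos (show m < k ∧ k ≤ k by omega),
                      if_pos (show m < k ∧ k ≤ k + 1 by omega)]
                    by_cases hs : (s : ℕ) < r
                    · rw [if_pos hs]
                    · rw [if_neg hs]
                      by_cases hcond : r ≤ (t : ℕ) ∧ (t : ℕ) < r + k * d
                      · rw [if_pos hcond, hQ0 _ _ (by omega)]
                      · rw [if_neg hcond]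
                  · have hmi' : m = k := le_antisymm hmk hmi
                    subst hmi'
                    rw [if_neg (show ¬(m < m ∧ m ≤ m) by omega),
                      if_neg (show ¬(m < m ∧ m ≤ m + 1) by omega)]
                    have ht : (t : ℕ) < r := val_lt_r t
                    by_cases hs : (s : ℕ) < r
                    · rw [if_pos hs]
                    · rw [if_neg hs, if_neg (show ¬((s : ℕ) = (t : ℕ)) by omega)]
                · have hs : (s : ℕ) < nF i r d ℓ k :=
                    lt_of_lt_of_eq (val_lt_big (show k + 1 ≠ i from hki) s)
                      (nF_ne i r d ℓ hk).symm
                  rw [if_pos hs]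
                  exact if_congr (by omega) rfl rfl


noncomputable def BF (i r d ℓ : ℕ) (Q' : ℕ → ℕ → ℝ) :
    ∀ j : ℕ, Matrix (Fin (nF i r d ℓ (j + 1))) (Fin d) ℝ :=
  fun j s c =>
    if j + 1 = i then Q' (s : ℕ) ((i - 1) * d + (c : ℕ))
    else if (s : ℕ) = r + j * d + (c : ℕ) then 1 else 0

noncomputable def Tval (d : ℕ) (T : ℕ → ℕ → Matrix (Fin d) (Fin d) ℝ) (k m a b : ℕ) : ℝ :=
  if h : a < d ∧ b < d then T k m ⟨a, h.1⟩ ⟨b, h.2⟩ else 0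

lemma Tval_eq {d : ℕ} (T : ℕ → ℕ → Matrix (Fin d) (Fin d) ℝ) (k m : ℕ) (c c' : Fin d) :
    Tval d T k m (c : ℕ) (c' : ℕ) = T k m c c' := by
  rw [Tval, dif_pos ⟨c.isLt, c'.isLt⟩]

noncomputable def CF (d ℓ i r : ℕ) (T : ℕ → ℕ → Matrix (Fin d) (Fin d) ℝ) (P' : ℕ → ℕ → ℝ) :
    ∀ k : ℕ, Matrix (Fin d) (Fin (nF i r d ℓ k)) ℝ :=
  fun k c s =>
    if k < i then
      (if r ≤ (s : ℕ) then Tval d T k (((s : ℕ) - r) / d) (c : ℕ) (((s : ℕ) - r) % d) else 0)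
    else if k = i then P' (c : ℕ) (s : ℕ)
    else if (s : ℕ) < r then P' ((k - i) * d + (c : ℕ)) (s : ℕ)
    else if i ≤ ((s : ℕ) - r) / d then
      Tval d T k (((s : ℕ) - r) / d) (c : ℕ) (((s : ℕ) - r) % d)
    else 0

lemma sum_delta_right {N : ℕ} (f : Fin N → ℝ) {a : ℕ} (ha : a < N) :
    (∑ u : Fin N, f u * (if (u : ℕ) = a then 1 else 0)) = f ⟨a, ha⟩ := by
  rw [Finset.sum_eq_single (⟨a, ha⟩ : Fin N)]
  · rw [if_pos rfl, mul_one]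
  · intro b _ hb
    rw [if_neg (fun hh => hb (Fin.ext hh)), mul_zero]
  · intro hmem; exact absurd (Finset.mem_univ _) hmem

lemma sum_fin_cast {N M : ℕ} (h : N = M) (f : ℕ → ℝ) :
    ∑ u : Fin N, f (u : ℕ) = ∑ u : Fin M, f (u : ℕ) := by subst h; rfl

lemma sum_fin_shrink {N r : ℕ} (h : r ≤ N) (f : ℕ → ℝ) (hf : ∀ a, r ≤ a → f a = 0) :
    ∑ u : Fin N, f (u : ℕ) = ∑ u : Fin r, f (u : ℕ) := by
  rw [Fin.sum_univ_eq_sum_range, Fin.sum_univ_eq_sum_range]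
  refine (Finset.sum_subset (Finset.range_subset_range.mpr h) fun x _ hx => ?_).symm
  exact hf x (Nat.le_of_not_lt (by simpa [Finset.mem_range] using hx))

lemma blk_lt_mul {d j i c : ℕ} (h : j < i) (hc : c < d) : j * d + c < i * d :=
  calc j * d + c < j * d + d := Nat.add_lt_add_left hc _
    _ = (j + 1) * d := (Nat.succ_mul j d).symm
    _ ≤ i * d := Nat.mul_le_mul_right d h

lemma blk_lt {d ℓ j c : ℕ} (hj : j < ℓ) (hc : c < d) : j * d + c < d * ℓ := by
  have := blk_lt_mul hj hc
  rwa [Nat.mul_comm ℓ d] at this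

lemma blk_div {d j c : ℕ} (hc : c < d) : (j * d + c) / d = j := by
  rw [Nat.add_comm, Nat.add_mul_div_right c j (Nat.lt_of_le_of_lt (Nat.zero_le c) hc),
    Nat.div_eq_of_lt hc, Nat.zero_add]

lemma blk_mod {d j c : ℕ} (hc : c < d) : (j * d + c) % d = c := by
  rw [Nat.add_comm, Nat.add_mul_mod_self_right, Nat.mod_eq_of_lt hc]

lemma construction (d ℓ i r : ℕ) (hd : 1 ≤ d) (h1 : 1 ≤ i) (h2 : i < ℓ)
    (T : ℕ → ℕ → Matrix (Fin d) (Fin d) ℝ) (P' Q' : ℕ → ℕ → ℝ)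
    (hQ0 : ∀ a b, r ≤ a → Q' a b = 0)
    (hPQ : ∀ a b, a < (ℓ - i) * d → b < i * d →
      (∑ u : Fin r, P' a (u : ℕ) * Q' (u : ℕ) b) =
        Tval d T (i + a / d) (b / d) (a % d) (b % d)) :
    IsRealization d ℓ T (nF i r d ℓ) (AF i r d ℓ Q') (BF i r d ℓ Q') (CF d ℓ i r T P')
      (fun k => T k k) := by
  constructor
  · intro k _; rfl
  intro k j hk hj
  ext c c'
  have hSP := stProd_AF i r d ℓ Q' h1 hQ0 k (j + 1) (by omega)
  simp only [Matrix.mul_apply, hSP]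
  symm
  by_cases hki : k < i
  · -- Case A : k < i
    have hjne : j + 1 ≠ i := by omega
    have hkne : k ≠ i := by omega
    have hNjk : nF i r d ℓ (j + 1) = nF i r d ℓ k := by
      rw [nF_ne i r d ℓ hjne, nF_ne i r d ℓ hkne]
    have htk : ∀ t : Fin (nF i r d ℓ (j + 1)), (t : ℕ) < nF i r d ℓ k :=
      fun t => lt_of_lt_of_eq t.isLt hNjk
    have hblk0 : j * d + (c' : ℕ) < d * ℓ := blk_lt (by omega) c'.isLt
    have hblk : r + j * d + (c' : ℕ) < nF i r d ℓ (j + 1) := by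
      rw [nF_ne i r d ℓ hjne, Nat.add_assoc]
      exact Nat.add_lt_add_left hblk0 r
    calc ∑ t : Fin (nF i r d ℓ (j + 1)),
          (∑ s : Fin (nF i r d ℓ k), CF d ℓ i r T P' k c s * SPF i r d Q' (j + 1) k ↑s ↑t) *
            BF i r d ℓ Q' j t c'
        = ∑ t : Fin (nF i r d ℓ (j + 1)),
            (fun t' : Fin (nF i r d ℓ (j + 1)) => CF d ℓ i r T P' k c ⟨(t' : ℕ), htk t'⟩) t *
              (if (t : ℕ) = r + j * d + (c' : ℕ) then 1 else 0) := by
          refine Finset.sum_congr rfl fun t _ => ?_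
          congr 1
          · calc ∑ s : Fin (nF i r d ℓ k), CF d ℓ i r T P' k c s * SPF i r d Q' (j + 1) k ↑s ↑t
                = ∑ s : Fin (nF i r d ℓ k), CF d ℓ i r T P' k c s *
                    (if (s : ℕ) = (t : ℕ) then 1 else 0) := by
                  refine Finset.sum_congr rfl fun s _ => ?_
                  rw [SPF, if_neg (show ¬(j + 1 < i ∧ i ≤ k) by omega)]
              _ = CF d ℓ i r T P' k c ⟨(t : ℕ), htk t⟩ := sum_delta_right _ (htk t)
          · rw [BF]; rw [if_neg hjne]
      _ = CF d ℓ i r T P' k c ⟨r + j * d + (c' : ℕ), htk ⟨_, hblk⟩⟩ :=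
          sum_delta_right (fun t' : Fin (nF i r d ℓ (j + 1)) =>
            CF d ℓ i r T P' k c ⟨(t' : ℕ), htk t'⟩) hblk
      _ = T k j c c' := by
          rw [CF]
          rw [if_pos hki,
            if_pos (show r ≤ r + j * d + (c' : ℕ) from
              le_trans (Nat.le_add_right r (j * d)) (Nat.le_add_right _ _))]
          rw [show r + j * d + (c' : ℕ) - r = j * d + (c' : ℕ) by
            rw [Nat.add_assoc]; exact Nat.add_sub_cancel_left r _]
          rw [blk_div c'.isLt, blk_mod c'.isLt, Tval_eq]
  · by_cases hk' : k = i
    · subst hk'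
      by_cases hji : j + 1 = k
      · -- Case B : k = i, j = i - 1
        have htk : ∀ t : Fin (nF k r d ℓ (j + 1)), (t : ℕ) < nF k r d ℓ k :=
          fun t => lt_of_lt_of_eq t.isLt (congrArg (nF k r d ℓ) hji)
        have hNj : nF k r d ℓ (j + 1) = r := by rw [hji, nF_eq]
        calc ∑ t : Fin (nF k r d ℓ (j + 1)),
              (∑ s : Fin (nF k r d ℓ k), CF d ℓ k r T P' k c s * SPF k r d Q' (j + 1) k ↑s ↑t) *
                BF k r d ℓ Q' j t c'
            = ∑ t : Fin (nF k r d ℓ (j + 1)),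
                (fun x => P' (c : ℕ) x * Q' x ((k - 1) * d + (c' : ℕ))) (t : ℕ) := by
              refine Finset.sum_congr rfl fun t _ => ?_
              have h1' : (∑ s : Fin (nF k r d ℓ k),
                  CF d ℓ k r T P' k c s * SPF k r d Q' (j + 1) k ↑s ↑t) = P' (c : ℕ) (t : ℕ) := by
                calc (∑ s : Fin (nF k r d ℓ k),
                      CF d ℓ k r T P' k c s * SPF k r d Q' (j + 1) k ↑s ↑t)
                    = ∑ s : Fin (nF k r d ℓ k), CF d ℓ k r T P' k c s *
                        (if (s : ℕ) = (t : ℕ) then 1 else 0) := by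
                      refine Finset.sum_congr rfl fun s _ => ?_
                      rw [SPF, if_neg (show ¬(j + 1 < k ∧ k ≤ k) by omega)]
                  _ = CF d ℓ k r T P' k c ⟨(t : ℕ), htk t⟩ := sum_delta_right _ (htk t)
                  _ = P' (c : ℕ) (t : ℕ) := by
                      rw [CF, if_neg (lt_irrefl k), if_pos rfl]
              rw [h1', BF, if_pos hji]
          _ = ∑ u : Fin r, (fun x => P' (c : ℕ) x * Q' x ((k - 1) * d + (c' : ℕ))) (u : ℕ) :=
              sum_fin_cast hNj (fun x => P' (c : ℕ) x * Q' x ((k - 1) * d + (c' : ℕ)))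
          _ = T k j c c' := by
              rw [hPQ (c : ℕ) ((k - 1) * d + (c' : ℕ))
                (lt_of_lt_of_le c.isLt
                  (le_trans (le_of_eq (Nat.one_mul d).symm)
                    (Nat.mul_le_mul_right d (by omega))))
                (blk_lt_mul (by omega) c'.isLt)]
              rw [Nat.div_eq_of_lt c.isLt, Nat.mod_eq_of_lt c.isLt,
                blk_div c'.isLt, blk_mod c'.isLt, Nat.add_zero,
                show k - 1 = j by omega, Tval_eq]
      · -- Case C : k = i, j + 1 < i
        have hjlt : j + 1 < k := by omega
        have hjne : j + 1 ≠ k := by omega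
        have hblk0 : j * d + (c' : ℕ) < d * ℓ := blk_lt (by omega) c'.isLt
        have hblk : r + j * d + (c' : ℕ) < nF k r d ℓ (j + 1) := by
          rw [nF_ne k r d ℓ hjne, Nat.add_assoc]
          exact Nat.add_lt_add_left hblk0 r
        have hblt : j * d + (c' : ℕ) < k * d := blk_lt_mul (by omega) c'.isLt
        calc ∑ t : Fin (nF k r d ℓ (j + 1)),
              (∑ s : Fin (nF k r d ℓ k), CF d ℓ k r T P' k c s * SPF k r d Q' (j + 1) k ↑s ↑t) *
                BF k r d ℓ Q' j t c'
            = ∑ t : Fin (nF k r d ℓ (j + 1)),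
                (fun t' : Fin (nF k r d ℓ (j + 1)) =>
                  ∑ s : Fin (nF k r d ℓ k), CF d ℓ k r T P' k c s *
                    SPF k r d Q' (j + 1) k ↑s ↑t') t *
                (if (t : ℕ) = r + j * d + (c' : ℕ) then 1 else 0) := by
              refine Finset.sum_congr rfl fun t _ => ?_
              rw [BF, if_neg hjne]
          _ = ∑ s : Fin (nF k r d ℓ k), CF d ℓ k r T P' k c s *
                SPF k r d Q' (j + 1) k ↑s (r + j * d + (c' : ℕ)) := sum_delta_right _ hblk
          _ = ∑ s : Fin (nF k r d ℓ k),
                (fun x => P' (c : ℕ) x * Q' x (j * d + (c' : ℕ))) (s : ℕ) := by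
              refine Finset.sum_congr rfl fun s _ => ?_
              rw [SPF, if_pos (show j + 1 < k ∧ k ≤ k by omega),
                if_pos (show r ≤ r + j * d + (c' : ℕ) ∧ r + j * d + (c' : ℕ) < r + k * d from
                  ⟨le_trans (Nat.le_add_right r (j * d)) (Nat.le_add_right _ _),
                   by rw [Nat.add_assoc]; exact Nat.add_lt_add_left hblt r⟩),
                show r + j * d + (c' : ℕ) - r = j * d + (c' : ℕ) by
                  rw [Nat.add_assoc]; exact Nat.add_sub_cancel_left r _,
                CF, if_neg (lt_irrefl k), if_pos rfl]
          _ = ∑ u : Fin r, (fun x => P' (c : ℕ) x * Q' x (j * d + (c' : ℕ))) (u : ℕ) :=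
              sum_fin_cast (nF_eq k r d ℓ) (fun x => P' (c : ℕ) x * Q' x (j * d + (c' : ℕ)))
          _ = T k j c c' := by
              rw [hPQ (c : ℕ) (j * d + (c' : ℕ))
                (lt_of_lt_of_le c.isLt
                  (le_trans (le_of_eq (Nat.one_mul d).symm)
                    (Nat.mul_le_mul_right d (by omega)))) hblt]
              rw [Nat.div_eq_of_lt c.isLt, Nat.mod_eq_of_lt c.isLt,
                blk_div c'.isLt, blk_mod c'.isLt, Nat.add_zero, Tval_eq]
    · -- k > i
      have hik : i < k := by omega
      have hkne : k ≠ i := by omega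
      by_cases hji : j + 1 = i
      · -- Case E : j + 1 = i
        have hNj : nF i r d ℓ (j + 1) = r := by rw [hji, nF_eq]
        have htk : ∀ t : Fin (nF i r d ℓ (j + 1)), (t : ℕ) < nF i r d ℓ k := by
          intro t
          have h1' : (t : ℕ) < r := lt_of_lt_of_eq t.isLt hNj
          exact lt_of_lt_of_le h1'
            (le_of_le_of_eq (Nat.le_add_right r (d * ℓ)) (nF_ne i r d ℓ hkne).symm)
        have htr : ∀ t : Fin (nF i r d ℓ (j + 1)), (t : ℕ) < r :=
          fun t => lt_of_lt_of_eq t.isLt hNj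
        calc ∑ t : Fin (nF i r d ℓ (j + 1)),
              (∑ s : Fin (nF i r d ℓ k), CF d ℓ i r T P' k c s * SPF i r d Q' (j + 1) k ↑s ↑t) *
                BF i r d ℓ Q' j t c'
            = ∑ t : Fin (nF i r d ℓ (j + 1)),
                (fun x => P' ((k - i) * d + (c : ℕ)) x * Q' x ((i - 1) * d + (c' : ℕ)))
                  (t : ℕ) := by
              refine Finset.sum_congr rfl fun t _ => ?_
              have h1' : (∑ s : Fin (nF i r d ℓ k),
                  CF d ℓ i r T P' k c s * SPF i r d Q' (j + 1) k ↑s ↑t) =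
                    P' ((k - i) * d + (c : ℕ)) (t : ℕ) := by
                calc (∑ s : Fin (nF i r d ℓ k),
                      CF d ℓ i r T P' k c s * SPF i r d Q' (j + 1) k ↑s ↑t)
                    = ∑ s : Fin (nF i r d ℓ k), CF d ℓ i r T P' k c s *
                        (if (s : ℕ) = (t : ℕ) then 1 else 0) := by
                      refine Finset.sum_congr rfl fun s _ => ?_
                      rw [SPF, if_neg (show ¬(j + 1 < i ∧ i ≤ k) by omega)]
                  _ = CF d ℓ i r T P' k c ⟨(t : ℕ), htk t⟩ := sum_delta_right _ (htk t)
                  _ = P' ((k - i) * d + (c : ℕ)) (t : ℕ) := by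
                      rw [CF, if_neg (by omega : ¬ k < i), if_neg hkne, if_pos (htr t)]
              rw [h1', BF, if_pos hji]
          _ = ∑ u : Fin r,
                (fun x => P' ((k - i) * d + (c : ℕ)) x * Q' x ((i - 1) * d + (c' : ℕ)))
                  (u : ℕ) := sum_fin_cast hNj (fun x => P' ((k - i) * d + (c : ℕ)) x * Q' x ((i - 1) * d + (c' : ℕ)))
          _ = T k j c c' := by
              rw [hPQ ((k - i) * d + (c : ℕ)) ((i - 1) * d + (c' : ℕ))
                (blk_lt_mul (by omega) c.isLt) (blk_lt_mul (by omega) c'.isLt)]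
              rw [blk_div c.isLt, blk_mod c.isLt, blk_div c'.isLt, blk_mod c'.isLt,
                show i + (k - i) = k by omega, show i - 1 = j by omega, Tval_eq]
      · by_cases hji2 : i ≤ j
        · -- Case D : j ≥ i
          have hjne : j + 1 ≠ i := by omega
          have hNjk : nF i r d ℓ (j + 1) = nF i r d ℓ k := by
            rw [nF_ne i r d ℓ hjne, nF_ne i r d ℓ hkne]
          have htk : ∀ t : Fin (nF i r d ℓ (j + 1)), (t : ℕ) < nF i r d ℓ k :=
            fun t => lt_of_lt_of_eq t.isLt hNjk
          have hblk0 : j * d + (c' : ℕ) < d * ℓ := blk_lt (by omega) c'.isLt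
          have hblk : r + j * d + (c' : ℕ) < nF i r d ℓ (j + 1) := by
            rw [nF_ne i r d ℓ hjne, Nat.add_assoc]
            exact Nat.add_lt_add_left hblk0 r
          calc ∑ t : Fin (nF i r d ℓ (j + 1)),
                (∑ s : Fin (nF i r d ℓ k), CF d ℓ i r T P' k c s * SPF i r d Q' (j + 1) k ↑s ↑t) *
                  BF i r d ℓ Q' j t c'
              = ∑ t : Fin (nF i r d ℓ (j + 1)),
                  (fun t' : Fin (nF i r d ℓ (j + 1)) =>
                    CF d ℓ i r T P' k c ⟨(t' : ℕ), htk t'⟩) t *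
                  (if (t : ℕ) = r + j * d + (c' : ℕ) then 1 else 0) := by
                refine Finset.sum_congr rfl fun t _ => ?_
                congr 1
                · calc ∑ s : Fin (nF i r d ℓ k), CF d ℓ i r T P' k c s *
                        SPF i r d Q' (j + 1) k ↑s ↑t
                      = ∑ s : Fin (nF i r d ℓ k), CF d ℓ i r T P' k c s *
                          (if (s : ℕ) = (t : ℕ) then 1 else 0) := by
                        refine Finset.sum_congr rfl fun s _ => ?_
                        rw [SPF, if_neg (show ¬(j + 1 < i ∧ i ≤ k) by omega)]
                    _ = CF d ℓ i r T P' k c ⟨(t : ℕ), htk t⟩ := sum_delta_right _ (htk t)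
                · rw [BF, if_neg hjne]
            _ = CF d ℓ i r T P' k c ⟨r + j * d + (c' : ℕ), htk ⟨_, hblk⟩⟩ :=
                sum_delta_right (fun t' : Fin (nF i r d ℓ (j + 1)) =>
                  CF d ℓ i r T P' k c ⟨(t' : ℕ), htk t'⟩) hblk
            _ = T k j c c' := by
                rw [CF, if_neg (by omega : ¬ k < i), if_neg hkne,
                  if_neg (show ¬(r + j * d + (c' : ℕ) < r) by
                    have := Nat.le_add_right r (j * d)
                    have := Nat.le_add_right (r + j * d) (c' : ℕ)
                    omega),
                  show r + j * d + (c' : ℕ) - r = j * d + (c' : ℕ) by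
                    rw [Nat.add_assoc]; exact Nat.add_sub_cancel_left r _,
                  blk_div c'.isLt, blk_mod c'.isLt, if_pos hji2, Tval_eq]
        · -- Case F : j + 1 < i, k > i
          have hjlt : j + 1 < i := by omega
          have hjne : j + 1 ≠ i := by omega
          have hblk0 : j * d + (c' : ℕ) < d * ℓ := blk_lt (by omega) c'.isLt
          have hblk : r + j * d + (c' : ℕ) < nF i r d ℓ (j + 1) := by
            rw [nF_ne i r d ℓ hjne, Nat.add_assoc]
            exact Nat.add_lt_add_left hblk0 r
          have hblt : j * d + (c' : ℕ) < i * d := blk_lt_mul (by omega) c'.isLt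
          calc ∑ t : Fin (nF i r d ℓ (j + 1)),
                (∑ s : Fin (nF i r d ℓ k), CF d ℓ i r T P' k c s * SPF i r d Q' (j + 1) k ↑s ↑t) *
                  BF i r d ℓ Q' j t c'
              = ∑ t : Fin (nF i r d ℓ (j + 1)),
                  (fun t' : Fin (nF i r d ℓ (j + 1)) =>
                    ∑ s : Fin (nF i r d ℓ k), CF d ℓ i r T P' k c s *
                      SPF i r d Q' (j + 1) k ↑s ↑t') t *
                  (if (t : ℕ) = r + j * d + (c' : ℕ) then 1 else 0) := by
                refine Finset.sum_congr rfl fun t _ => ?_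
                rw [BF, if_neg hjne]
            _ = ∑ s : Fin (nF i r d ℓ k), CF d ℓ i r T P' k c s *
                  SPF i r d Q' (j + 1) k ↑s (r + j * d + (c' : ℕ)) := sum_delta_right _ hblk
            _ = ∑ s : Fin (nF i r d ℓ k),
                  (fun x => P' ((k - i) * d + (c : ℕ)) x * Q' x (j * d + (c' : ℕ))) (s : ℕ) := by
                refine Finset.sum_congr rfl fun s _ => ?_
                rw [SPF, if_pos (show j + 1 < i ∧ i ≤ k by omega),
                  if_pos (show r ≤ r + j * d + (c' : ℕ) ∧ r + j * d + (c' : ℕ) < r + i * d from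
                    ⟨le_trans (Nat.le_add_right r (j * d)) (Nat.le_add_right _ _),
                     by rw [Nat.add_assoc]; exact Nat.add_lt_add_left hblt r⟩),
                  show r + j * d + (c' : ℕ) - r = j * d + (c' : ℕ) by
                    rw [Nat.add_assoc]; exact Nat.add_sub_cancel_left r _]
                by_cases hs : (s : ℕ) < r
                · rw [CF, if_neg (by omega : ¬ k < i), if_neg hkne, if_pos hs]
                · show CF d ℓ i r T P' k c s * Q' (s : ℕ) (j * d + (c' : ℕ)) =
                    P' ((k - i) * d + (c : ℕ)) (s : ℕ) * Q' (s : ℕ) (j * d + (c' : ℕ))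
                  rw [hQ0 _ _ (Nat.le_of_not_lt hs), mul_zero, mul_zero]
            _ = ∑ u : Fin r,
                  (fun x => P' ((k - i) * d + (c : ℕ)) x * Q' x (j * d + (c' : ℕ))) (u : ℕ) :=
                sum_fin_shrink
                  (le_of_le_of_eq (Nat.le_add_right r (d * ℓ)) (nF_ne i r d ℓ hkne).symm)
                  _ (fun a ha => by
                    show P' ((k - i) * d + (c : ℕ)) a * Q' a (j * d + (c' : ℕ)) = 0
                    rw [hQ0 _ _ ha, mul_zero])
            _ = T k j c c' := by
                rw [hPQ ((k - i) * d + (c : ℕ)) (j * d + (c' : ℕ))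
                  (blk_lt_mul (by omega) c.isLt) hblt]
                rw [blk_div c.isLt, blk_mod c.isLt, blk_div c'.isLt, blk_mod c'.isLt,
                  show i + (k - i) = k by omega, Tval_eq]

lemma stProd_self' {n : ℕ → ℕ} {A : ∀ i : ℕ, Matrix (Fin (n (i + 1))) (Fin (n i)) ℝ} (k : ℕ) :
    stProd n A k k = 1 := by
  ext s t
  rw [stProd_self_apply, Matrix.one_apply]
  simp [Fin.ext_iff]

lemma stProd_comp {n : ℕ → ℕ} {A : ∀ i : ℕ, Matrix (Fin (n (i + 1))) (Fin (n i)) ℝ}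
    {j m : ℕ} (hjm : j ≤ m) :
    ∀ k, m ≤ k → stProd n A k j = stProd n A k m * stProd n A m j
  | 0, h => by
      have : m = 0 := Nat.le_zero.mp h
      subst this
      rw [stProd_self', Matrix.one_mul]
  | k + 1, h => by
      rcases Nat.eq_or_lt_of_le h with h' | h'
      · subst h'
        rw [stProd_self', Matrix.one_mul]
      · have hm : m ≤ k := Nat.lt_succ_iff.mp h'
        rw [stProd_succ_of_ne (by omega), stProd_succ_of_ne (by omega),
          stProd_comp hjm k hm, Matrix.mul_assoc]

lemma exists_rank_factorization {m q : Type*} [Fintype m] [Fintype q] (H : Matrix m q ℝ) :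
    ∃ (P : Matrix m (Fin H.rank) ℝ) (Q : Matrix (Fin H.rank) q ℝ), H = P * Q := by
  classical
  have hr : H.rank = Module.finrank ℝ (Submodule.span ℝ (Set.range Hᵀ)) :=
    H.rank_eq_finrank_span_cols
  let b : Module.Basis (Fin H.rank) ℝ (Submodule.span ℝ (Set.range Hᵀ)) :=
    (Module.finBasis ℝ _).reindex (finCongr hr.symm)
  refine ⟨fun x t => (b t : m → ℝ) x,
    fun t c => b.repr ⟨Hᵀ c, Submodule.subset_span ⟨c, rfl⟩⟩ t, ?_⟩
  ext x c
  have hv := b.sum_repr ⟨Hᵀ c, Submodule.subset_span ⟨c, rfl⟩⟩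
  have h2 := congrArg (fun v : (Submodule.span ℝ (Set.range Hᵀ)) => (v : m → ℝ) x) hv
  simp only at h2
  change H x c = ∑ t, (b t : m → ℝ) x * b.repr ⟨Hᵀ c, Submodule.subset_span ⟨c, rfl⟩⟩ t
  rw [show H x c = Hᵀ c x from rfl, ← h2]
  push_cast
  rw [Finset.sum_apply]
  refine Finset.sum_congr rfl fun t _ => ?_
  simp [mul_comm]

/-- Theorem 2: for every causal operator `T` and every `1 ≤ i ≤ ℓ - 1`,
the minimum of the state size `n i` over all recurrent realizations of `T` equals
`rank H_i`. -/
theorem minimal_state_size_eq_rank (d ℓ : ℕ) (hd : 1 ≤ d) (hℓ : 1 ≤ ℓ)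
    (T : ℕ → ℕ → Matrix (Fin d) (Fin d) ℝ) (hT : IsCausal d ℓ T)
    (i : ℕ) (h1 : 1 ≤ i) (h2 : i < ℓ) :
    IsLeast {k : ℕ | ∃ (n : ℕ → ℕ)
        (A : ∀ j : ℕ, Matrix (Fin (n (j + 1))) (Fin (n j)) ℝ)
        (B : ∀ j : ℕ, Matrix (Fin (n (j + 1))) (Fin d) ℝ)
        (C : ∀ j : ℕ, Matrix (Fin d) (Fin (n j)) ℝ)
        (D : ℕ → Matrix (Fin d) (Fin d) ℝ),
        IsRealization d ℓ T n A B C D ∧ n i = k}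
      (Hmat d ℓ T i).rank := by
  classical
  have hd0 : 0 < d := hd
  constructor
  · -- membership : the rank is achieved
    obtain ⟨P, Q, hPQm⟩ := exists_rank_factorization (Hmat d ℓ T i)
    set P' : ℕ → ℕ → ℝ := fun a t =>
      if h : a < (ℓ - i) * d ∧ t < (Hmat d ℓ T i).rank then
        P (⟨a / d, (Nat.div_lt_iff_lt_mul hd0).mpr h.1⟩, ⟨a % d, Nat.mod_lt a hd0⟩) ⟨t, h.2⟩
      else 0 with hP'
    set Q' : ℕ → ℕ → ℝ := fun t b =>
      if h : t < (Hmat d ℓ T i).rank ∧ b < i * d then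
        Q ⟨t, h.1⟩ (⟨b / d, (Nat.div_lt_iff_lt_mul hd0).mpr h.2⟩, ⟨b % d, Nat.mod_lt b hd0⟩)
      else 0 with hQ'
    have hQ0 : ∀ a b, (Hmat d ℓ T i).rank ≤ a → Q' a b = 0 := by
      intro a b ha
      rw [hQ']
      exact dif_neg fun h => absurd h.1 (not_lt.mpr ha)
    have hPQ : ∀ a b, a < (ℓ - i) * d → b < i * d →
        (∑ u : Fin (Hmat d ℓ T i).rank, P' a (u : ℕ) * Q' (u : ℕ) b) =
          Tval d T (i + a / d) (b / d) (a % d) (b % d) := by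
      intro a b ha hb
      calc ∑ u : Fin (Hmat d ℓ T i).rank, P' a (u : ℕ) * Q' (u : ℕ) b
          = ∑ u : Fin (Hmat d ℓ T i).rank,
              P (⟨a / d, (Nat.div_lt_iff_lt_mul hd0).mpr ha⟩, ⟨a % d, Nat.mod_lt a hd0⟩) u *
              Q u (⟨b / d, (Nat.div_lt_iff_lt_mul hd0).mpr hb⟩, ⟨b % d, Nat.mod_lt b hd0⟩) := by
            refine Finset.sum_congr rfl fun u _ => ?_
            rw [hP', hQ']
            simp only
            rw [dif_pos ⟨ha, u.isLt⟩, dif_pos ⟨u.isLt, hb⟩]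
        _ = (P * Q) (⟨a / d, (Nat.div_lt_iff_lt_mul hd0).mpr ha⟩, ⟨a % d, Nat.mod_lt a hd0⟩)
              (⟨b / d, (Nat.div_lt_iff_lt_mul hd0).mpr hb⟩, ⟨b % d, Nat.mod_lt b hd0⟩) :=
            (Matrix.mul_apply).symm
        _ = Hmat d ℓ T i
              (⟨a / d, (Nat.div_lt_iff_lt_mul hd0).mpr ha⟩, ⟨a % d, Nat.mod_lt a hd0⟩)
              (⟨b / d, (Nat.div_lt_iff_lt_mul hd0).mpr hb⟩, ⟨b % d, Nat.mod_lt b hd0⟩) := by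
            rw [← hPQm]
        _ = Tval d T (i + a / d) (b / d) (a % d) (b % d) := by
            rw [Tval, dif_pos ⟨Nat.mod_lt a hd0, Nat.mod_lt b hd0⟩]
            rfl
    exact ⟨nF i (Hmat d ℓ T i).rank d ℓ, AF i (Hmat d ℓ T i).rank d ℓ Q',
      BF i (Hmat d ℓ T i).rank d ℓ Q', CF d ℓ i (Hmat d ℓ T i).rank T P', fun k => T k k,
      construction d ℓ i (Hmat d ℓ T i).rank hd h1 h2 T P' Q' hQ0 hPQ,
      nF_eq i (Hmat d ℓ T i).rank d ℓ⟩
  · -- lower bound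
    rintro x ⟨n, A, B, C, D, hreal, hni⟩
    have hH : Hmat d ℓ T i = Obs d ℓ n A C i * Ctrb d n A B i := by
      ext ⟨pk, pc⟩ ⟨qj, qc⟩
      have hkℓ : i + (pk : ℕ) < ℓ := by have := pk.isLt; omega
      have hji : (qj : ℕ) < i := qj.isLt
      have hm : T (i + (pk : ℕ)) (qj : ℕ) =
          (C (i + (pk : ℕ)) * stProd n A (i + (pk : ℕ)) i) *
            (stProd n A i ((qj : ℕ) + 1) * B (qj : ℕ)) := by
        rw [hreal.2 (i + (pk : ℕ)) (qj : ℕ) hkℓ (by omega),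
          stProd_comp hji (i + (pk : ℕ)) (Nat.le_add_right i (pk : ℕ))]
        simp only [Matrix.mul_assoc]
      show T (i + (pk : ℕ)) (qj : ℕ) pc qc = _
      rw [hm, Matrix.mul_apply]
      rfl
    rw [hH]
    refine le_trans (Matrix.rank_mul_le_left _ _) (le_trans (Matrix.rank_le_card_width _) ?_)
    rw [Fintype.card_fin, hni]
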